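/- (Kopell's Lemma) Suppose f and g are orientation-preserving C² diffeomorphisms of the half-open interval [a,b) that commute, i.e., f∘g = g∘f. If f has no fixed point in the open interval (a,b) and g has at least one fixed point in (a,b), then g is the identity. -/

import Mathlib

open Set

/-- `f` is an orientation-preserving `C^n` diffeomorphism of the set `s ⊆ ℝ`
onto itself: it maps `s` bijectively onto `s`, is `C^n` on `s`, and has
everywhere positive derivative on `s`. -/
def IsDiffeoOn (n : WithTop ℕ∞) (s : Set ℝ) (f : ℝ → ℝ) : Prop :=
  Set.InjOn f s ∧ f '' s = s ∧ ContDiffOn ℝ n f s ∧ ∀ x ∈ s, 0 < derivWithin f s x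

namespace KopellAux

open Filter Topology

variable {a b : ℝ} {φ : ℝ → ℝ}

lemma Ico_mem_nhds_of_Ioo {x : ℝ} (hx : x ∈ Ioo a b) : Ico a b ∈ 𝓝 x :=
  Filter.mem_of_superset (isOpen_Ioo.mem_nhds hx) Ioo_subset_Ico_self

lemma contOn (hφ : IsDiffeoOn 2 (Ico a b) φ) : ContinuousOn φ (Ico a b) :=
  hφ.2.2.1.continuousOn

lemma diffOn (hφ : IsDiffeoOn 2 (Ico a b) φ) : DifferentiableOn ℝ φ (Ico a b) :=
  hφ.2.2.1.differentiableOn (by norm_num)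

lemma hasDW (hφ : IsDiffeoOn 2 (Ico a b) φ) {x : ℝ} (hx : x ∈ Ico a b) :
    HasDerivWithinAt φ (derivWithin φ (Ico a b) x) (Ico a b) x :=
  ((diffOn hφ) x hx).hasDerivWithinAt

lemma strictMonoOn (hφ : IsDiffeoOn 2 (Ico a b) φ) : StrictMonoOn φ (Ico a b) := by
  apply strictMonoOn_of_deriv_pos (convex_Ico a b) (contOn hφ)
  intro x hx
  rw [interior_Ico] at hx
  have h := hφ.2.2.2 x (Ioo_subset_Ico_self hx)
  rwa [derivWithin_of_mem_nhds (Ico_mem_nhds_of_Ioo hx)] at h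

lemma map_a (hab : a < b) (hφ : IsDiffeoOn 2 (Ico a b) φ) : φ a = a := by
  have ha : a ∈ Ico a b := ⟨le_rfl, hab⟩
  have h1 : φ a ∈ Ico a b := hφ.2.1 ▸ mem_image_of_mem φ ha
  obtain ⟨y, hy, hya⟩ : a ∈ φ '' Ico a b := by rw [hφ.2.1]; exact ha
  have : φ a ≤ φ y := (strictMonoOn hφ).monotoneOn ha hy hy.1
  rw [hya] at this
  exact le_antisymm this h1.1

lemma mapsTo (hφ : IsDiffeoOn 2 (Ico a b) φ) : MapsTo φ (Ico a b) (Ico a b) :=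
  fun _ hx => hφ.2.1 ▸ mem_image_of_mem φ hx

lemma mapsTo_Ioo (hab : a < b) (hφ : IsDiffeoOn 2 (Ico a b) φ) :
    MapsTo φ (Ioo a b) (Ioo a b) := by
  intro x hx
  have h1 : φ x ∈ Ico a b := mapsTo hφ (Ioo_subset_Ico_self hx)
  have h2 : φ a < φ x := strictMonoOn hφ ⟨le_rfl, hab⟩ (Ioo_subset_Ico_self hx) hx.1
  rw [map_a hab hφ] at h2
  exact ⟨h2, h1.2⟩

lemma contOn_deriv (hφ : IsDiffeoOn 2 (Ico a b) φ) :
    ContinuousOn (derivWithin φ (Ico a b)) (Ico a b) :=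
  hφ.2.2.1.continuousOn_derivWithin (uniqueDiffOn_Ico a b) (by norm_num)

lemma iter_mapsTo (hφ : IsDiffeoOn 2 (Ico a b) φ) (n : ℕ) :
    MapsTo (φ^[n]) (Ico a b) (Ico a b) := by
  induction n with
  | zero => simpa using mapsTo_id _
  | succ n ih => rw [Function.iterate_succ']; exact (mapsTo hφ).comp ih

lemma iter_contOn (hφ : IsDiffeoOn 2 (Ico a b) φ) (n : ℕ) :
    ContinuousOn (φ^[n]) (Ico a b) := by
  induction n with
  | zero => simpa using continuousOn_id
  | succ n ih => rw [Function.iterate_succ']; exact (contOn hφ).comp ih (iter_mapsTo hφ n)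

lemma iter_injOn (hφ : IsDiffeoOn 2 (Ico a b) φ) (n : ℕ) : InjOn (φ^[n]) (Ico a b) := by
  induction n with
  | zero => simpa using injOn_id _
  | succ n ih => rw [Function.iterate_succ']; exact hφ.1.comp ih (iter_mapsTo hφ n)

lemma iter_smono (hφ : IsDiffeoOn 2 (Ico a b) φ) (n : ℕ) : StrictMonoOn (φ^[n]) (Ico a b) := by
  induction n with
  | zero => simpa using strictMonoOn_id
  | succ n ih =>
    rw [Function.iterate_succ']
    exact (strictMonoOn hφ).comp ih (iter_mapsTo hφ n)

/-- The derivative of the `n`-th iterate, as a product. -/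
noncomputable def P (φ : ℝ → ℝ) (s : Set ℝ) (n : ℕ) (x : ℝ) : ℝ :=
  ∏ k ∈ Finset.range n, derivWithin φ s (φ^[k] x)

lemma hasDW_iter (hφ : IsDiffeoOn 2 (Ico a b) φ) (n : ℕ) {x : ℝ} (hx : x ∈ Ico a b) :
    HasDerivWithinAt (φ^[n]) (P φ (Ico a b) n x) (Ico a b) x := by
  induction n with
  | zero => simpa [P] using hasDerivWithinAt_id x (Ico a b)
  | succ n ih =>
    rw [Function.iterate_succ']
    have h1 : HasDerivWithinAt φ (derivWithin φ (Ico a b) (φ^[n] x)) (Ico a b) (φ^[n] x) :=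
      hasDW hφ (iter_mapsTo hφ n hx)
    have := HasDerivWithinAt.comp x h1 ih (iter_mapsTo hφ n)
    rw [P, Finset.prod_range_succ, mul_comm]
    exact this

lemma P_pos (hφ : IsDiffeoOn 2 (Ico a b) φ) (n : ℕ) {x : ℝ} (hx : x ∈ Ico a b) :
    0 < P φ (Ico a b) n x := by
  apply Finset.prod_pos
  intro k _
  exact hφ.2.2.2 _ (iter_mapsTo hφ k hx)

lemma P_contOn (hφ : IsDiffeoOn 2 (Ico a b) φ) (n : ℕ) :
    ContinuousOn (P φ (Ico a b) n) (Ico a b) := by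
  apply continuousOn_finset_prod
  intro k _
  exact (contOn_deriv hφ).comp (iter_contOn hφ k) (iter_mapsTo hφ k)


/-! ### Telescoping sums -/

lemma sum_tele {F : ℕ → ℝ} (hF : ∀ i, F (i + 1) ≤ F i) {α : ℝ} (hα : ∀ n, α ≤ F n)
    {n N : ℕ} {σ : ℕ → ℕ} (hσ : ∀ i < n, ∀ j < n, σ i = σ j → i = j)
    (hN : ∀ j < n, σ j < N) :
    ∑ j ∈ Finset.range n, (F (σ j) - F (σ j + 1)) ≤ F 0 - α := by
  have h1 : ∑ j ∈ Finset.range n, (F (σ j) - F (σ j + 1))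
      = ∑ i ∈ (Finset.range n).image σ, (F i - F (i + 1)) := by
    rw [Finset.sum_image]
    intro i hi j hj hij
    exact hσ i (Finset.mem_range.1 hi) j (Finset.mem_range.1 hj) hij
  rw [h1]
  have h2 : (Finset.range n).image σ ⊆ Finset.range N := by
    intro i hi
    obtain ⟨j, hj, rfl⟩ := Finset.mem_image.1 hi
    exact Finset.mem_range.2 (hN j (Finset.mem_range.1 hj))
  have h3 : ∑ i ∈ (Finset.range n).image σ, (F i - F (i + 1))
      ≤ ∑ i ∈ Finset.range N, (F i - F (i + 1)) := by
    apply Finset.sum_le_sum_of_subset_of_nonneg h2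
    intro i _ _
    exact sub_nonneg.2 (hF i)
  have h4 : ∑ i ∈ Finset.range N, (F i - F (i + 1)) = F 0 - F N := Finset.sum_range_sub' F N
  calc ∑ i ∈ (Finset.range n).image σ, (F i - F (i + 1)) ≤ F 0 - F N := h3.trans_eq h4
    _ ≤ F 0 - α := by linarith [hα N]

/-! ### The basic distortion estimates -/

/-- On a compact subinterval `[a,c]` the derivative satisfies a multiplicative
Lipschitz-type estimate coming from the `C²` hypothesis. -/
lemma exists_ratio (hab : a < b) (hφ : IsDiffeoOn 2 (Ico a b) φ) {c : ℝ} (hc : c ∈ Ico a b) :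
    ∃ C : ℝ, 0 ≤ C ∧ ∀ p ∈ Icc a c, ∀ q ∈ Icc a c,
      derivWithin φ (Ico a b) p ≤ derivWithin φ (Ico a b) q * Real.exp (C * |p - q|) := by
  have hsub : Icc a c ⊆ Ico a b := Icc_subset_Ico_right hc.2
  have hK : IsCompact (Icc a c) := isCompact_Icc
  have hne : (Icc a c).Nonempty := ⟨a, le_rfl, hc.1⟩
  obtain ⟨p₀, hp₀, hmin⟩ := hK.exists_isMinOn hne ((contOn_deriv hφ).mono hsub)
  set m := derivWithin φ (Ico a b) p₀ with hm_def
  have hm : 0 < m := hφ.2.2.2 _ (hsub hp₀)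
  have hd1 : ContDiffOn ℝ 1 (derivWithin φ (Ico a b)) (Ico a b) :=
    hφ.2.2.1.derivWithin (uniqueDiffOn_Ico a b) (by norm_num)
  have hd1' : DifferentiableOn ℝ (derivWithin φ (Ico a b)) (Ico a b) :=
    hd1.differentiableOn (by norm_num)
  have hd2 : ContinuousOn (derivWithin (derivWithin φ (Ico a b)) (Ico a b)) (Ico a b) :=
    hd1.continuousOn_derivWithin (uniqueDiffOn_Ico a b) le_rfl
  obtain ⟨B, hB⟩ := hK.exists_bound_of_continuousOn (hd2.mono hsub)
  have hB0 : 0 ≤ B := le_trans (norm_nonneg _) (hB a ⟨le_rfl, hc.1⟩)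
  refine ⟨B / m, div_nonneg hB0 hm.le, ?_⟩
  intro p hp q hq
  have hlip : |derivWithin φ (Ico a b) p - derivWithin φ (Ico a b) q| ≤ B * |p - q| := by
    have := Convex.norm_image_sub_le_of_norm_hasDerivWithin_le
      (f := derivWithin φ (Ico a b))
      (f' := derivWithin (derivWithin φ (Ico a b)) (Ico a b))
      (fun x hx => ((hd1' x (hsub hx)).hasDerivWithinAt).mono hsub)
      (fun x hx => hB x hx) (convex_Icc a c) hq hp
    simpa [Real.norm_eq_abs] using this
  set Dp := derivWithin φ (Ico a b) p
  set Dq := derivWithin φ (Ico a b) q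
  have hqm : m ≤ Dq := hmin hq
  have hq0 : 0 < Dq := lt_of_lt_of_le hm hqm
  have h1 : Dp ≤ Dq + B * |p - q| := by
    have := abs_sub_le_iff.1 hlip
    linarith [this.1]
  have h2 : B * |p - q| ≤ Dq * (B / m * |p - q|) := by
    have habs : 0 ≤ |p - q| := abs_nonneg _
    have : B * |p - q| = m * (B / m * |p - q|) := by field_simp
    rw [this]
    apply mul_le_mul_of_nonneg_right hqm
    positivity
  have h3 : 1 + B / m * |p - q| ≤ Real.exp (B / m * |p - q|) := by
    have := Real.add_one_le_exp (B / m * |p - q|)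
    linarith
  calc Dp ≤ Dq + Dq * (B / m * |p - q|) := by linarith
    _ = Dq * (1 + B / m * |p - q|) := by ring
    _ ≤ Dq * Real.exp (B / m * |p - q|) := mul_le_mul_of_nonneg_left h3 hq0.le

/-- The basic distortion estimate for the derivative of iterates. -/
lemma distortion (hφ : IsDiffeoOn 2 (Ico a b) φ) {c : ℝ} (hc : c ∈ Ico a b) {C : ℝ}
    (hC0 : 0 ≤ C)
    (hC : ∀ p ∈ Icc a c, ∀ q ∈ Icc a c,
      derivWithin φ (Ico a b) p ≤ derivWithin φ (Ico a b) q * Real.exp (C * |p - q|))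
    {u v : ℝ} {n : ℕ} (hu : ∀ j < n, φ^[j] u ∈ Icc a c) (hv : ∀ j < n, φ^[j] v ∈ Icc a c)
    {L : ℝ} (hL : ∑ j ∈ Finset.range n, |φ^[j] u - φ^[j] v| ≤ L)
    (huI : u ∈ Ico a b) (hvI : v ∈ Ico a b) :
    P φ (Ico a b) n u ≤ Real.exp (C * L) * P φ (Ico a b) n v := by
  have hsub : Icc a c ⊆ Ico a b := Icc_subset_Ico_right hc.2
  have key : P φ (Ico a b) n u ≤ ∏ j ∈ Finset.range n,
      (derivWithin φ (Ico a b) (φ^[j] v) * Real.exp (C * |φ^[j] u - φ^[j] v|)) := by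
    apply Finset.prod_le_prod
    · intro j _
      exact (hφ.2.2.2 _ (iter_mapsTo hφ j huI)).le
    · intro j hj
      exact hC _ (hu j (Finset.mem_range.1 hj)) _ (hv j (Finset.mem_range.1 hj))
  rw [Finset.prod_mul_distrib, ← Real.exp_sum] at key
  have hsum : ∑ j ∈ Finset.range n, C * |φ^[j] u - φ^[j] v| ≤ C * L := by
    rw [← Finset.mul_sum]
    exact mul_le_mul_of_nonneg_left hL hC0
  calc P φ (Ico a b) n u
      ≤ (∏ j ∈ Finset.range n, derivWithin φ (Ico a b) (φ^[j] v)) *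
        Real.exp (∑ j ∈ Finset.range n, C * |φ^[j] u - φ^[j] v|) := key
    _ ≤ P φ (Ico a b) n v * Real.exp (C * L) := by
        apply mul_le_mul_of_nonneg_left (Real.exp_le_exp.2 hsum)
        exact (P_pos hφ n hvI).le
    _ = Real.exp (C * L) * P φ (Ico a b) n v := mul_comm _ _

/-! ### Commutation of iterates and the key derivative identity -/

section comm

variable {f g : ℝ → ℝ}

lemma comm_iter_right (hg : IsDiffeoOn 2 (Ico a b) g)
    (hcomm : ∀ x ∈ Ico a b, f (g x) = g (f x)) (m : ℕ) :
    ∀ x ∈ Ico a b, f (g^[m] x) = g^[m] (f x) := by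
  induction m with
  | zero => simp
  | succ m ih =>
    intro x hx
    rw [Function.iterate_succ_apply', Function.iterate_succ_apply',
      hcomm _ (iter_mapsTo hg m hx), ih x hx]

lemma comm_iter (hf : IsDiffeoOn 2 (Ico a b) f) (hg : IsDiffeoOn 2 (Ico a b) g)
    (hcomm : ∀ x ∈ Ico a b, f (g x) = g (f x)) (n m : ℕ) :
    ∀ x ∈ Ico a b, f^[n] (g^[m] x) = g^[m] (f^[n] x) := by
  induction n with
  | zero => simp
  | succ n ih =>
    intro x hx
    rw [Function.iterate_succ_apply', Function.iterate_succ_apply', ih x hx,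
      comm_iter_right hg hcomm m _ (iter_mapsTo hf n hx)]

lemma key_identity (hf : IsDiffeoOn 2 (Ico a b) f) (hg : IsDiffeoOn 2 (Ico a b) g)
    (hcomm : ∀ x ∈ Ico a b, f (g x) = g (f x)) (n m : ℕ) {z : ℝ} (hz : z ∈ Ico a b) :
    P g (Ico a b) m (f^[n] z) * P f (Ico a b) n z
      = P f (Ico a b) n (g^[m] z) * P g (Ico a b) m z := by
  have h1 : HasDerivWithinAt (g^[m] ∘ f^[n])
      (P g (Ico a b) m (f^[n] z) * P f (Ico a b) n z) (Ico a b) z :=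
    HasDerivWithinAt.comp z (hasDW_iter hg m (iter_mapsTo hf n hz)) (hasDW_iter hf n hz)
      (iter_mapsTo hf n)
  have h2 : HasDerivWithinAt (f^[n] ∘ g^[m])
      (P f (Ico a b) n (g^[m] z) * P g (Ico a b) m z) (Ico a b) z :=
    HasDerivWithinAt.comp z (hasDW_iter hf n (iter_mapsTo hg m hz)) (hasDW_iter hg m hz)
      (iter_mapsTo hg m)
  have h3 : HasDerivWithinAt (g^[m] ∘ f^[n])
      (P f (Ico a b) n (g^[m] z) * P g (Ico a b) m z) (Ico a b) z := by
    apply h2.congr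
    · intro x hx
      exact (comm_iter hf hg hcomm n m x hx).symm
    · exact (comm_iter hf hg hcomm n m z hz).symm
  have hu := (uniqueDiffOn_Ico a b) z hz
  rw [← h1.derivWithin hu, ← h3.derivWithin hu]

end comm

/-! ### The derivative at `a` equals 1 -/

lemma deriv_a_eq_one (hab : a < b) {g : ℝ → ℝ} (hg : IsDiffeoOn 2 (Ico a b) g)
    (x : ℕ → ℝ) (hmem : ∀ n, x n ∈ Ioo a b) (hlt : ∀ n, x (n + 1) < x n)
    (hta : Filter.Tendsto x Filter.atTop (𝓝 a)) (hfix : ∀ n, g (x n) = x n) :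
    derivWithin g (Ico a b) a = 1 := by
  have hξ : ∀ n : ℕ, ∃ ξ ∈ Ioo (x (n + 1)) (x n), derivWithin g (Ico a b) ξ = 1 := by
    intro n
    have hIoosub : Ioo (x (n + 1)) (x n) ⊆ Ioo a b := fun t ht =>
      ⟨lt_trans (hmem (n + 1)).1 ht.1, lt_trans ht.2 (hmem n).2⟩
    have hIccsub : Icc (x (n + 1)) (x n) ⊆ Ico a b := fun t ht =>
      ⟨le_trans (hmem (n + 1)).1.le ht.1, lt_of_le_of_lt ht.2 (hmem n).2⟩
    obtain ⟨ξ, hξI, hξeq⟩ := exists_hasDerivAt_eq_slope g (fun t => derivWithin g (Ico a b) t)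
      (hlt n) ((contOn hg).mono hIccsub)
      (fun t ht => (hasDW hg (Ioo_subset_Ico_self (hIoosub ht))).hasDerivAt
        (Ico_mem_nhds_of_Ioo (hIoosub ht)))
    refine ⟨ξ, hξI, ?_⟩
    rw [hξeq, hfix, hfix, div_self (sub_ne_zero.2 (hlt n).ne')]
  choose ξ hξI hξeq using hξ
  have hξmem : ∀ n, ξ n ∈ Ico a b := fun n =>
    ⟨le_of_lt (lt_trans (hmem (n + 1)).1 (hξI n).1),
      lt_trans (hξI n).2 (hmem n).2⟩
  have h1 : Filter.Tendsto ξ Filter.atTop (𝓝 a) := by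
    apply tendsto_of_tendsto_of_tendsto_of_le_of_le
      (hta.comp (Filter.tendsto_add_atTop_nat 1)) hta
    · exact fun n => (hξI n).1.le
    · exact fun n => (hξI n).2.le
  have h2 : Filter.Tendsto (fun n => derivWithin g (Ico a b) (ξ n)) Filter.atTop
      (𝓝 (derivWithin g (Ico a b) a)) := by
    apply ((contOn_deriv hg) a ⟨le_rfl, hab⟩).tendsto.comp
    rw [tendsto_nhdsWithin_iff]
    exact ⟨h1, Filter.Eventually.of_forall hξmem⟩
  simp only [hξeq] at h2
  exact (tendsto_nhds_unique h2 tendsto_const_nhds)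

lemma P_at_a (hab : a < b) {g : ℝ → ℝ} (hg : IsDiffeoOn 2 (Ico a b) g)
    (hda : derivWithin g (Ico a b) a = 1) (m : ℕ) : P g (Ico a b) m a = 1 := by
  have hfix : ∀ k : ℕ, g^[k] a = a := by
    intro k
    induction k with
    | zero => simp
    | succ k ih => rw [Function.iterate_succ_apply', ih, map_a hab hg]
  unfold P
  rw [Finset.prod_congr rfl (fun k _ => by rw [hfix k, hda])]
  simp


/-! ### Sign dichotomy on an interval without fixed points -/

lemma no_fix_sign {g : ℝ → ℝ} {c d : ℝ} (hcont : ContinuousOn g (Ioo c d))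
    (hnofix : ∀ z ∈ Ioo c d, g z ≠ z) :
    (∀ z ∈ Ioo c d, g z < z) ∨ (∀ z ∈ Ioo c d, z < g z) := by
  by_contra hcon
  push_neg at hcon
  obtain ⟨⟨z₁, hz₁, h₁⟩, ⟨z₂, hz₂, h₂⟩⟩ := hcon
  have h₁' : z₁ < g z₁ := lt_of_le_of_ne h₁ (Ne.symm (hnofix z₁ hz₁))
  have h₂' : g z₂ < z₂ := lt_of_le_of_ne h₂ (hnofix z₂ hz₂)
  rcases le_total z₁ z₂ with h | h
  · have hsub : Icc z₁ z₂ ⊆ Ioo c d := fun t ht =>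
      ⟨lt_of_lt_of_le hz₁.1 ht.1, lt_of_le_of_lt ht.2 hz₂.2⟩
    have hFc : ContinuousOn (fun t => g t - t) (Icc z₁ z₂) :=
      (hcont.mono hsub).sub continuousOn_id
    have h0 : (0:ℝ) ∈ Icc (g z₂ - z₂) (g z₁ - z₁) := ⟨by linarith, by linarith⟩
    obtain ⟨t, htI, ht⟩ := intermediate_value_Icc' h hFc h0
    exact hnofix t (hsub htI) (by rw [sub_eq_zero] at ht; exact ht)
  · have hsub : Icc z₂ z₁ ⊆ Ioo c d := fun t ht =>
      ⟨lt_of_lt_of_le hz₂.1 ht.1, lt_of_le_of_lt ht.2 hz₁.2⟩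
    have hFc : ContinuousOn (fun t => g t - t) (Icc z₂ z₁) :=
      (hcont.mono hsub).sub continuousOn_id
    have h0 : (0:ℝ) ∈ Icc (g z₂ - z₂) (g z₁ - z₁) := ⟨by linarith, by linarith⟩
    obtain ⟨t, htI, ht⟩ := intermediate_value_Icc h hFc h0
    exact hnofix t (hsub htI) (by rw [sub_eq_zero] at ht; exact ht)

/-! ### The core contradiction -/

lemma core (hab : a < b) {g : ℝ → ℝ} (hg : IsDiffeoOn 2 (Ico a b) g)
    (x : ℕ → ℝ) (hmem : ∀ n, x n ∈ Ioo a b) (hlt : ∀ n, x (n + 1) < x n)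
    (hfix : ∀ n, g (x n) = x n)
    (hta : Filter.Tendsto x Filter.atTop (𝓝 a))
    {ε : ℝ} (hε : 0 < ε)
    (hbound : ∀ m k : ℕ, ∀ z ∈ Icc (x (k + 1)) (x k), ε ≤ P g (Ico a b) m z)
    {w : ℝ} (hw : w ∈ Ioo a (x 0)) (hgw : g w ≠ w) : False := by
  -- locate `w` between consecutive points of the sequence
  have hex : ∃ m, x m < w := (hta.eventually_lt_const hw.1).exists
  have hM0 : Nat.find hex ≠ 0 := by
    intro h
    have hspec := Nat.find_spec hex
    rw [h] at hspec
    exact absurd hspec (not_lt.2 hw.2.le)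
  obtain ⟨k, hk⟩ := Nat.exists_eq_succ_of_ne_zero hM0
  have h1 : x (k + 1) < w := by have := Nat.find_spec hex; rwa [hk] at this
  have h2 : w ≤ x k := not_lt.1 (Nat.find_min hex (by omega))
  have hIccsub : Icc (x (k + 1)) (x k) ⊆ Ico a b := fun t ht =>
    ⟨(hmem (k + 1)).1.le.trans ht.1, lt_of_le_of_lt ht.2 (hmem k).2⟩
  have hwk : w < x k := lt_of_le_of_ne h2 (fun h => hgw (by rw [h]; exact hfix k))
  have hwIco : w ∈ Ico a b := hIccsub ⟨h1.le, h2⟩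
  -- largest fixed point below `w`, smallest fixed point above `w`
  set Fdn := {z ∈ Icc (x (k + 1)) w | g z = z} with hFdn
  have hFdn_ne : Fdn.Nonempty := ⟨x (k + 1), ⟨le_rfl, h1.le⟩, hfix (k + 1)⟩
  have hFdn_bdd : BddAbove Fdn := ⟨w, fun z hz => hz.1.2⟩
  have hFdn_cl : IsClosed Fdn := by
    have hc1 : ContinuousOn (fun z => g z - z) (Icc (x (k + 1)) w) :=
      ((contOn hg).mono (fun t ht => hIccsub ⟨ht.1, ht.2.trans h2⟩)).sub continuousOn_id
    have heq : Fdn = Icc (x (k + 1)) w ∩ (fun z => g z - z) ⁻¹' {0} := by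
      ext z
      simp only [hFdn, Set.mem_sep_iff, mem_inter_iff, mem_preimage, mem_singleton_iff,
        sub_eq_zero]
    rw [heq]
    exact hc1.preimage_isClosed_of_isClosed isClosed_Icc isClosed_singleton
  set c := sSup Fdn with hc_def
  have hcF : c ∈ Fdn := hFdn_cl.csSup_mem hFdn_ne hFdn_bdd
  have hgc : g c = c := hcF.2
  have hcw : c ≤ w := hcF.1.2
  have hcx : x (k + 1) ≤ c := hcF.1.1
  have hcw' : c < w := lt_of_le_of_ne hcw (fun h => hgw (by rw [← h]; exact hgc))
  set Fup := {z ∈ Icc w (x k) | g z = z} with hFup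
  have hFup_ne : Fup.Nonempty := ⟨x k, ⟨h2, le_rfl⟩, hfix k⟩
  have hFup_bdd : BddBelow Fup := ⟨w, fun z hz => hz.1.1⟩
  have hFup_cl : IsClosed Fup := by
    have hc1 : ContinuousOn (fun z => g z - z) (Icc w (x k)) :=
      ((contOn hg).mono (fun t ht => hIccsub ⟨h1.le.trans ht.1, ht.2⟩)).sub continuousOn_id
    have heq : Fup = Icc w (x k) ∩ (fun z => g z - z) ⁻¹' {0} := by
      ext z
      simp only [hFup, Set.mem_sep_iff, mem_inter_iff, mem_preimage, mem_singleton_iff,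
        sub_eq_zero]
    rw [heq]
    exact hc1.preimage_isClosed_of_isClosed isClosed_Icc isClosed_singleton
  set d := sInf Fup with hd_def
  have hdF : d ∈ Fup := hFup_cl.csInf_mem hFup_ne hFup_bdd
  have hgd : g d = d := hdF.2
  have hwd : w ≤ d := hdF.1.1
  have hdx : d ≤ x k := hdF.1.2
  have hwd' : w < d := lt_of_le_of_ne hwd (fun h => hgw (by rw [h]; exact hgd))
  have hcIco : c ∈ Ico a b := hIccsub ⟨hcx, hcw.trans h2⟩
  have hdIco : d ∈ Ico a b := hIccsub ⟨h1.le.trans hwd, hdx⟩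
  have hac : a < c := lt_of_lt_of_le (hmem (k + 1)).1 hcx
  have hIoo_sub : Ioo c d ⊆ Icc (x (k + 1)) (x k) := fun z hz =>
    ⟨hcx.trans hz.1.le, hz.2.le.trans hdx⟩
  have hIoo_Ico : Ioo c d ⊆ Ico a b := fun z hz => hIccsub (hIoo_sub hz)
  have hIoo_ab : Ioo c d ⊆ Ioo a b := fun z hz =>
    ⟨lt_trans hac hz.1, (hIoo_Ico hz).2⟩
  have hnofix : ∀ z ∈ Ioo c d, g z ≠ z := by
    intro z hz hzfix
    rcases le_total z w with h | h
    · exact absurd (le_csSup hFdn_bdd ⟨⟨hcx.trans hz.1.le, h⟩, hzfix⟩) (not_le.2 hz.1)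
    · exact absurd (csInf_le hFup_bdd ⟨⟨h, hz.2.le.trans hdx⟩, hzfix⟩) (not_le.2 hz.2)
  have hmapsIoo : ∀ z ∈ Ioo c d, g z ∈ Ioo c d := by
    intro z hz
    constructor
    · have := strictMonoOn hg hcIco (hIoo_Ico hz) hz.1
      rwa [hgc] at this
    · have := strictMonoOn hg (hIoo_Ico hz) hdIco hz.2
      rwa [hgd] at this
  have hiter : ∀ z ∈ Ioo c d, ∀ m : ℕ, g^[m] z ∈ Ioo c d := by
    intro z hz m
    induction m with
    | zero => simpa using hz
    | succ m ih => rw [Function.iterate_succ_apply']; exact hmapsIoo _ ih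
  have hwIoo : w ∈ Ioo c d := ⟨hcw', hwd'⟩
  -- the Mean Value Theorem step, given two points whose orbits converge together
  have MVT : ∀ u v : ℝ, u ∈ Ioo c d → v ∈ Ioo c d → u < v →
      Filter.Tendsto (fun m => g^[m] v - g^[m] u) Filter.atTop (𝓝 0) → False := by
    intro u v huI hvI huv hconv
    have hpos' : 0 < ε * (v - u) := mul_pos hε (by linarith)
    obtain ⟨m, hm⟩ := (hconv.eventually_lt_const hpos').exists
    have hIccuv : Icc u v ⊆ Ico a b := fun t ht =>
      hIoo_Ico ⟨lt_of_lt_of_le huI.1 ht.1, lt_of_le_of_lt ht.2 hvI.2⟩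
    obtain ⟨ξ, hξI, hξeq⟩ := exists_hasDerivAt_eq_slope (g^[m]) (fun t => P g (Ico a b) m t) huv
      ((iter_contOn hg m).mono hIccuv)
      (fun t ht => by
        have htIoo : t ∈ Ioo c d := ⟨lt_trans huI.1 ht.1, lt_trans ht.2 hvI.2⟩
        have htIab : t ∈ Ioo a b := hIoo_ab htIoo
        exact (hasDW_iter hg m (Ioo_subset_Ico_self htIab)).hasDerivAt
          (Ico_mem_nhds_of_Ioo htIab))
    have hξIcc : ξ ∈ Icc (x (k + 1)) (x k) :=
      hIoo_sub ⟨lt_trans huI.1 hξI.1, lt_trans hξI.2 hvI.2⟩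
    have hb := hbound m k ξ hξIcc
    rw [hξeq] at hb
    have hvu : 0 < v - u := by linarith
    have : ε * (v - u) ≤ g^[m] v - g^[m] u := (le_div_iff₀ hvu).1 hb
    linarith
  rcases no_fix_sign ((contOn hg).mono hIoo_Ico) hnofix with hneg | hpos
  · -- g < id on (c,d) : orbits tend to c
    have hlim : ∀ z ∈ Ioo c d, Filter.Tendsto (fun m => g^[m] z) Filter.atTop (𝓝 c) := by
      intro z hz
      have hanti : Antitone (fun m => g^[m] z) := antitone_nat_of_succ_le (fun m => by
        rw [Function.iterate_succ_apply']
        exact (hneg _ (hiter z hz m)).le)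
      have hbdd : BddBelow (Set.range fun m => g^[m] z) :=
        ⟨c, by rintro _ ⟨m, rfl⟩; exact (hiter z hz m).1.le⟩
      have htL := tendsto_atTop_ciInf hanti hbdd
      set L := ⨅ m, g^[m] z with hL
      have hcL : c ≤ L := le_ciInf (fun m => (hiter z hz m).1.le)
      have hLz : L ≤ z := by simpa using ciInf_le hbdd 0
      have hLd : L < d := lt_of_le_of_lt hLz hz.2
      have hLIco : L ∈ Ico a b :=
        ⟨hcIco.1.trans hcL, lt_trans hLd (lt_of_le_of_lt hdx (hmem k).2)⟩
      have hgL : g L = L := by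
        have t1 : Filter.Tendsto (fun m => g^[m + 1] z) Filter.atTop (𝓝 L) :=
          htL.comp (Filter.tendsto_add_atTop_nat 1)
        have t2 : Filter.Tendsto (fun m => g (g^[m] z)) Filter.atTop (𝓝 (g L)) := by
          apply ((contOn hg) L hLIco).tendsto.comp
          rw [tendsto_nhdsWithin_iff]
          exact ⟨htL, Filter.Eventually.of_forall (fun m => hIoo_Ico (hiter z hz m))⟩
        have heq : (fun m => g^[m + 1] z) = fun m => g (g^[m] z) := by
          funext m; rw [Function.iterate_succ_apply']
        rw [heq] at t1
        exact tendsto_nhds_unique t2 t1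
      rcases eq_or_lt_of_le hcL with h | h
      · exact h ▸ htL
      · exact absurd hgL (hnofix L ⟨h, hLd⟩)
    set u := (c + w) / 2 with hu_def
    have huI : u ∈ Ioo c d := ⟨by simp only [hu_def]; linarith, by simp only [hu_def]; linarith⟩
    have huw : u < w := by simp only [hu_def]; linarith
    exact MVT u w huI hwIoo huw (by simpa using (hlim w hwIoo).sub (hlim u huI))
  · -- id < g on (c,d) : orbits tend to d
    have hlim : ∀ z ∈ Ioo c d, Filter.Tendsto (fun m => g^[m] z) Filter.atTop (𝓝 d) := by
      intro z hz
      have hmono : Monotone (fun m => g^[m] z) := monotone_nat_of_le_succ (fun m => by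
        rw [Function.iterate_succ_apply']
        exact (hpos _ (hiter z hz m)).le)
      have hbdd : BddAbove (Set.range fun m => g^[m] z) :=
        ⟨d, by rintro _ ⟨m, rfl⟩; exact (hiter z hz m).2.le⟩
      have htL := tendsto_atTop_ciSup hmono hbdd
      set L := ⨆ m, g^[m] z with hL
      have hLd : L ≤ d := ciSup_le (fun m => (hiter z hz m).2.le)
      have hzL : z ≤ L := by simpa using le_ciSup hbdd 0
      have hcL : c < L := lt_of_lt_of_le hz.1 hzL
      have hLIco : L ∈ Ico a b :=
        ⟨hcIco.1.trans hcL.le, lt_of_le_of_lt (hLd.trans hdx) (hmem k).2⟩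
      have hgL : g L = L := by
        have t1 : Filter.Tendsto (fun m => g^[m + 1] z) Filter.atTop (𝓝 L) :=
          htL.comp (Filter.tendsto_add_atTop_nat 1)
        have t2 : Filter.Tendsto (fun m => g (g^[m] z)) Filter.atTop (𝓝 (g L)) := by
          apply ((contOn hg) L hLIco).tendsto.comp
          rw [tendsto_nhdsWithin_iff]
          exact ⟨htL, Filter.Eventually.of_forall (fun m => hIoo_Ico (hiter z hz m))⟩
        have heq : (fun m => g^[m + 1] z) = fun m => g (g^[m] z) := by
          funext m; rw [Function.iterate_succ_apply']
        rw [heq] at t1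
        exact tendsto_nhds_unique t2 t1
      rcases eq_or_lt_of_le hLd with h | h
      · exact h ▸ htL
      · exact absurd hgL (hnofix L ⟨hcL, h⟩)
    set v := (w + d) / 2 with hv_def
    have hvI : v ∈ Ioo c d := ⟨by simp only [hv_def]; linarith, by simp only [hv_def]; linarith⟩
    have hwv : w < v := by simp only [hv_def]; linarith
    exact MVT w v hwIoo hvI hwv (by simpa using (hlim v hvI).sub (hlim w hwIoo))


/-! ### Orbits of a fixed-point-free contraction tend to `a` -/

lemma iter_mem_Ioo (hab : a < b) (hφ : IsDiffeoOn 2 (Ico a b) φ) {y : ℝ}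
    (hy : y ∈ Ioo a b) (n : ℕ) : φ^[n] y ∈ Ioo a b := by
  induction n with
  | zero => simpa using hy
  | succ n ih => rw [Function.iterate_succ_apply']; exact mapsTo_Ioo hab hφ ih

lemma orbit_tendsto (hab : a < b) (hφ : IsDiffeoOn 2 (Ico a b) φ)
    (hflt : ∀ z ∈ Ioo a b, φ z < z) {y : ℝ} (hy : y ∈ Ioo a b) :
    Filter.Tendsto (fun n => φ^[n] y) Filter.atTop (𝓝 a) := by
  have hmem := fun n => iter_mem_Ioo hab hφ hy n
  have hanti : Antitone (fun n => φ^[n] y) := antitone_nat_of_succ_le fun n => by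
    rw [Function.iterate_succ_apply']
    exact (hflt _ (hmem n)).le
  have hbdd : BddBelow (Set.range fun n => φ^[n] y) :=
    ⟨a, by rintro _ ⟨n, rfl⟩; exact (hmem n).1.le⟩
  have htL := tendsto_atTop_ciInf hanti hbdd
  set L := ⨅ n, φ^[n] y with hL
  have haL : a ≤ L := le_ciInf fun n => (hmem n).1.le
  have hLy : L ≤ y := by simpa using ciInf_le hbdd 0
  have hLIco : L ∈ Ico a b := ⟨haL, lt_of_le_of_lt hLy hy.2⟩
  have hfL : φ L = L := by
    have t1 : Filter.Tendsto (fun n => φ^[n + 1] y) Filter.atTop (𝓝 L) :=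
      htL.comp (Filter.tendsto_add_atTop_nat 1)
    have t2 : Filter.Tendsto (fun n => φ (φ^[n] y)) Filter.atTop (𝓝 (φ L)) := by
      apply ((contOn hφ) L hLIco).tendsto.comp
      rw [tendsto_nhdsWithin_iff]
      exact ⟨htL, Filter.Eventually.of_forall (fun n => Ioo_subset_Ico_self (hmem n))⟩
    have heq : (fun n => φ^[n + 1] y) = fun n => φ (φ^[n] y) := by
      funext n; rw [Function.iterate_succ_apply']
    rw [heq] at t1
    exact tendsto_nhds_unique t2 t1
  rcases eq_or_lt_of_le haL with h | h
  · exact h ▸ htL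
  · exact absurd hfL (ne_of_lt (hflt L ⟨h, hLIco.2⟩))

/-! ### The contraction case -/

lemma case_contraction {f g : ℝ → ℝ} (hab : a < b)
    (hf : IsDiffeoOn 2 (Ico a b) f) (hg : IsDiffeoOn 2 (Ico a b) g)
    (hcomm : ∀ x ∈ Ico a b, f (g x) = g (f x))
    (hflt : ∀ z ∈ Ioo a b, f z < z)
    {x₀ : ℝ} (hx₀ : x₀ ∈ Ioo a b) (hgx₀ : g x₀ = x₀)
    {y : ℝ} (hy : y ∈ Ico a b) (hgy : g y ≠ y) : False := by
  set x : ℕ → ℝ := fun n => f^[n] x₀ with hx_def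
  have hx0 : x 0 = x₀ := by simp [hx_def]
  have hmemx : ∀ n, x n ∈ Ioo a b := fun n => iter_mem_Ioo hab hf hx₀ n
  have hltx : ∀ n, x (n + 1) < x n := by
    intro n
    have : x (n + 1) = f (x n) := by
      simp only [hx_def]; rw [Function.iterate_succ_apply']
    rw [this]
    exact hflt _ (hmemx n)
  have ax : Antitone x := antitone_nat_of_succ_le (fun n => (hltx n).le)
  have hfixx : ∀ n, g (x n) = x n := by
    intro n
    induction n with
    | zero => rw [hx0]; exact hgx₀
    | succ n ih =>
      have h1 : x (n + 1) = f (x n) := by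
        simp only [hx_def]; rw [Function.iterate_succ_apply']
      rw [h1, ← hcomm _ (Ioo_subset_Ico_self (hmemx n)), ih]
  have htax : Filter.Tendsto x Filter.atTop (𝓝 a) := orbit_tendsto hab hf hflt hx₀
  have hxadd : ∀ i j : ℕ, f^[j] (x i) = x (i + j) := by
    intro i j
    simp only [hx_def]
    rw [← Function.iterate_add_apply]
    congr 1
    omega
  -- distortion constants
  have hx0Ico : x 0 ∈ Ico a b := Ioo_subset_Ico_self (hmemx 0)
  obtain ⟨C, hC0, hC⟩ := exists_ratio hab hf hx0Ico
  set V := C * (x 0 - a) with hV_def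
  have hV0 : 0 ≤ V := mul_nonneg hC0 (by linarith [(hmemx 0).1])
  have ga1 : derivWithin g (Ico a b) a = 1 := deriv_a_eq_one hab hg x hmemx hltx htax hfixx
  have hε : (0:ℝ) < Real.exp (-V) := Real.exp_pos _
  -- the uniform lower bound on derivatives of iterates of g
  have hbound : ∀ m k : ℕ, ∀ z ∈ Icc (x (k + 1)) (x k), Real.exp (-V) ≤ P g (Ico a b) m z := by
    intro m k z hz
    have hIccsub : Icc (x (k + 1)) (x k) ⊆ Ico a b := fun t ht =>
      ⟨(hmemx (k + 1)).1.le.trans ht.1, lt_of_le_of_lt ht.2 (hmemx k).2⟩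
    have hzIco : z ∈ Ico a b := hIccsub hz
    -- g preserves the fundamental domain
    have hgIcc : ∀ t ∈ Icc (x (k + 1)) (x k), g t ∈ Icc (x (k + 1)) (x k) := by
      intro t ht
      constructor
      · have := (strictMonoOn hg).monotoneOn (hIccsub ⟨le_rfl, (hltx k).le⟩) (hIccsub ht) ht.1
        rwa [hfixx] at this
      · have := (strictMonoOn hg).monotoneOn (hIccsub ht) (hIccsub ⟨(hltx k).le, le_rfl⟩) ht.2
        rwa [hfixx] at this
    have hgmIcc : ∀ m' : ℕ, g^[m'] z ∈ Icc (x (k + 1)) (x k) := by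
      intro m'
      induction m' with
      | zero => simpa using hz
      | succ m' ih => rw [Function.iterate_succ_apply']; exact hgIcc _ ih
    -- f iterates map the fundamental domain to deeper ones
    have hfIcc : ∀ t ∈ Icc (x (k + 1)) (x k), ∀ j : ℕ, f^[j] t ∈ Icc (x (k + j + 1)) (x (k + j)) := by
      intro t ht j
      have e1 : f^[j] (x (k + 1)) = x (k + j + 1) := by rw [hxadd]; congr 1; omega
      have e2 : f^[j] (x k) = x (k + j) := by rw [hxadd]
      constructor
      · have := (iter_smono hf j).monotoneOn (hIccsub ⟨le_rfl, (hltx k).le⟩) (hIccsub ht) ht.1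
        rwa [e1] at this
      · have := (iter_smono hf j).monotoneOn (hIccsub ht) (hIccsub ⟨(hltx k).le, le_rfl⟩) ht.2
        rwa [e2] at this
    have hsubIcc0 : ∀ i : ℕ, Icc (x (i + 1)) (x i) ⊆ Icc a (x 0) := fun i t ht =>
      ⟨(hmemx (i + 1)).1.le.trans ht.1, ht.2.trans (ax (Nat.zero_le i))⟩
    -- the key estimate, for every n
    have hstep : ∀ n : ℕ, Real.exp (-V) * P g (Ico a b) m (f^[n] z) ≤ P g (Ico a b) m z := by
      intro n
      have hgm_Ico : g^[m] z ∈ Ico a b := hIccsub (hgmIcc m)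
      have hdist : P f (Ico a b) n (g^[m] z) ≤ Real.exp V * P f (Ico a b) n z := by
        have hL : ∑ j ∈ Finset.range n, |f^[j] (g^[m] z) - f^[j] z| ≤ x 0 - a := by
          have heach : ∀ j ∈ Finset.range n, |f^[j] (g^[m] z) - f^[j] z|
              ≤ x (k + j) - x (k + j + 1) := by
            intro j _
            have h1 := hfIcc _ (hgmIcc m) j
            have h2 := hfIcc _ hz j
            rw [abs_sub_le_iff]
            constructor
            · linarith [h1.1, h1.2, h2.1, h2.2]
            · linarith [h1.1, h1.2, h2.1, h2.2]
          calc ∑ j ∈ Finset.range n, |f^[j] (g^[m] z) - f^[j] z|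
              ≤ ∑ j ∈ Finset.range n, (x (k + j) - x (k + j + 1)) :=
                Finset.sum_le_sum heach
            _ ≤ x 0 - a := sum_tele (fun i => (hltx i).le) (fun i => (hmemx i).1.le)
                (σ := fun j => k + j) (fun i _ j _ h => by omega)
                (N := k + n + 1) (fun j hj => by omega)
        have hV_eq : Real.exp V = Real.exp (C * (x 0 - a)) := by rw [hV_def]
        rw [hV_eq]
        apply distortion hf hx0Ico hC0 hC
          (fun j hj => hsubIcc0 (k + j) (hfIcc _ (hgmIcc m) j))
          (fun j hj => hsubIcc0 (k + j) (hfIcc _ hz j)) hL hgm_Ico hzIco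
      have hid := key_identity hf hg hcomm n m hzIco
      have hPfz : 0 < P f (Ico a b) n z := P_pos hf n hzIco
      have hPfg : 0 < P f (Ico a b) n (g^[m] z) := P_pos hf n hgm_Ico
      have hPg1 : 0 ≤ P g (Ico a b) m (f^[n] z) :=
        (P_pos hg m (iter_mapsTo hf n hzIco)).le
      have h1 : Real.exp (-V) * P f (Ico a b) n (g^[m] z) ≤ P f (Ico a b) n z := by
        have h := mul_le_mul_of_nonneg_left hdist (Real.exp_pos (-V)).le
        rwa [← mul_assoc, ← Real.exp_add, neg_add_cancel, Real.exp_zero, one_mul] at h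
      have h2 : (Real.exp (-V) * P g (Ico a b) m (f^[n] z)) * P f (Ico a b) n (g^[m] z)
          ≤ P g (Ico a b) m z * P f (Ico a b) n (g^[m] z) := by
        calc (Real.exp (-V) * P g (Ico a b) m (f^[n] z)) * P f (Ico a b) n (g^[m] z)
            = P g (Ico a b) m (f^[n] z) * (Real.exp (-V) * P f (Ico a b) n (g^[m] z)) := by ring
          _ ≤ P g (Ico a b) m (f^[n] z) * P f (Ico a b) n z :=
              mul_le_mul_of_nonneg_left h1 hPg1
          _ = P f (Ico a b) n (g^[m] z) * P g (Ico a b) m z := hid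
          _ = P g (Ico a b) m z * P f (Ico a b) n (g^[m] z) := by ring
      exact le_of_mul_le_mul_right h2 hPfg
    -- pass to the limit
    have hzIoo : z ∈ Ioo a b := ⟨lt_of_lt_of_le (hmemx (k + 1)).1 hz.1, hzIco.2⟩
    have hfn_t : Filter.Tendsto (fun n => f^[n] z) Filter.atTop (𝓝 a) :=
      orbit_tendsto hab hf hflt hzIoo
    have hPt : Filter.Tendsto (fun n => P g (Ico a b) m (f^[n] z)) Filter.atTop (𝓝 1) := by
      have hmem' : Filter.Tendsto (fun n => f^[n] z) Filter.atTop (𝓝[Ico a b] a) := by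
        rw [tendsto_nhdsWithin_iff]
        exact ⟨hfn_t, Filter.Eventually.of_forall
          (fun n => Ioo_subset_Ico_self (iter_mem_Ioo hab hf hzIoo n))⟩
      have h := ((P_contOn hg m) a ⟨le_rfl, hab⟩).tendsto.comp hmem'
      rwa [P_at_a hab hg ga1 m] at h
    have hT : Filter.Tendsto (fun n => Real.exp (-V) * P g (Ico a b) m (f^[n] z))
        Filter.atTop (𝓝 (Real.exp (-V))) := by
      simpa using hPt.const_mul (Real.exp (-V))
    exact le_of_tendsto hT (Filter.Eventually.of_forall hstep)
  -- produce a non-fixed point of g below x 0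
  have hya : y ≠ a := fun h => hgy (by rw [h]; exact map_a hab hg)
  have hyIoo : y ∈ Ioo a b := ⟨lt_of_le_of_ne hy.1 (Ne.symm hya), hy.2⟩
  have hyt := orbit_tendsto hab hf hflt hyIoo
  obtain ⟨n, hn⟩ := (hyt.eventually_lt_const (hmemx 0).1).exists
  have hwIoo : f^[n] y ∈ Ioo a b := iter_mem_Ioo hab hf hyIoo n
  have hw : f^[n] y ∈ Ioo a (x 0) := ⟨hwIoo.1, hn⟩
  have hgww : g (f^[n] y) ≠ f^[n] y := by
    intro h
    have hcy : f^[n] (g y) = g (f^[n] y) := by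
      have := comm_iter hf hg hcomm n 1 y hy
      simpa using this
    rw [← hcy] at h
    exact hgy (iter_injOn hf n (mapsTo hg hy) hy h)
  exact core hab hg x hmemx hltx hfixx htax hε hbound hw hgww


/-! ### The expansion case -/

lemma case_expansion {f g : ℝ → ℝ} (hab : a < b)
    (hf : IsDiffeoOn 2 (Ico a b) f) (hg : IsDiffeoOn 2 (Ico a b) g)
    (hcomm : ∀ x ∈ Ico a b, f (g x) = g (f x))
    (hfgt : ∀ z ∈ Ioo a b, z < f z)
    {x₀ : ℝ} (hx₀ : x₀ ∈ Ioo a b) (hgx₀ : g x₀ = x₀)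
    {y : ℝ} (hy : y ∈ Ico a b) (hgy : g y ≠ y) : False := by
  classical
  -- a right inverse `pre` of `f` on `[a,b)`
  have hpre0 : ∀ t : ℝ, ∃ z : ℝ, t ∈ Ico a b → z ∈ Ico a b ∧ f z = t := by
    intro t
    by_cases ht : t ∈ Ico a b
    · obtain ⟨z, hz, hzt⟩ : t ∈ f '' Ico a b := by rw [hf.2.1]; exact ht
      exact ⟨z, fun _ => ⟨hz, hzt⟩⟩
    · exact ⟨0, fun h => absurd h ht⟩
  choose pre hpre using hpre0
  have hIco : ∀ (t : ℝ), t ∈ Ico a b → ∀ n : ℕ, pre^[n] t ∈ Ico a b := by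
    intro t ht n
    induction n with
    | zero => simpa using ht
    | succ n ih => rw [Function.iterate_succ_apply']; exact (hpre _ ih).1
  have hfpre : ∀ (t : ℝ), t ∈ Ico a b → ∀ n : ℕ, f (pre^[n + 1] t) = pre^[n] t := by
    intro t ht n
    rw [Function.iterate_succ_apply']
    exact (hpre _ (hIco t ht n)).2
  have hIoo : ∀ (t : ℝ), t ∈ Ioo a b → ∀ n : ℕ, pre^[n] t ∈ Ioo a b := by
    intro t ht n
    induction n with
    | zero => simpa using ht
    | succ n ih =>
      have h1 : pre^[n + 1] t ∈ Ico a b := hIco t (Ioo_subset_Ico_self ht) (n + 1)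
      rcases eq_or_lt_of_le h1.1 with h | h
      · exfalso
        have h2 := hfpre t (Ioo_subset_Ico_self ht) n
        rw [← h, map_a hab hf] at h2
        exact (ne_of_lt ih.1) h2
      · exact ⟨h, h1.2⟩
  have hdec : ∀ (t : ℝ), t ∈ Ioo a b → ∀ n : ℕ, pre^[n + 1] t < pre^[n] t := by
    intro t ht n
    have h1 : pre^[n + 1] t ∈ Ioo a b := hIoo t ht (n + 1)
    have h2 := hfgt _ h1
    rwa [hfpre t (Ioo_subset_Ico_self ht) n] at h2
  have hiterpre : ∀ (t : ℝ), t ∈ Ico a b → ∀ (j i : ℕ), f^[j] (pre^[i + j] t) = pre^[i] t := by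
    intro t ht j
    induction j with
    | zero => intro i; simp
    | succ j ih =>
      intro i
      rw [Function.iterate_succ_apply]
      have h1 : f (pre^[i + (j + 1)] t) = pre^[i + j] t := by
        rw [show i + (j + 1) = (i + j) + 1 by omega]
        exact hfpre t ht (i + j)
      rw [h1, ih i]
  have htend : ∀ (t : ℝ), t ∈ Ioo a b →
      Filter.Tendsto (fun n => pre^[n] t) Filter.atTop (𝓝 a) := by
    intro t ht
    have hmem := fun n => hIoo t ht n
    have hanti : Antitone (fun n => pre^[n] t) :=
      antitone_nat_of_succ_le (fun n => (hdec t ht n).le)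
    have hbdd : BddBelow (Set.range fun n => pre^[n] t) :=
      ⟨a, by rintro _ ⟨n, rfl⟩; exact (hmem n).1.le⟩
    have htL := tendsto_atTop_ciInf hanti hbdd
    set L := ⨅ n, pre^[n] t with hL
    have haL : a ≤ L := le_ciInf fun n => (hmem n).1.le
    have hLt : L ≤ t := by simpa using ciInf_le hbdd 0
    have hLIco : L ∈ Ico a b := ⟨haL, lt_of_le_of_lt hLt ht.2⟩
    have hfL : f L = L := by
      have t1 : Filter.Tendsto (fun n => pre^[n + 1] t) Filter.atTop (𝓝 L) :=
        htL.comp (Filter.tendsto_add_atTop_nat 1)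
      have t2 : Filter.Tendsto (fun n => f (pre^[n + 1] t)) Filter.atTop (𝓝 (f L)) := by
        apply ((contOn hf) L hLIco).tendsto.comp
        rw [tendsto_nhdsWithin_iff]
        exact ⟨t1, Filter.Eventually.of_forall (fun n => Ioo_subset_Ico_self (hmem (n + 1)))⟩
      have heq : (fun n => f (pre^[n + 1] t)) = fun n => pre^[n] t := by
        funext n; exact hfpre t (Ioo_subset_Ico_self ht) n
      rw [heq] at t2
      exact tendsto_nhds_unique t2 htL
    rcases eq_or_lt_of_le haL with h | h
    · exact h ▸ htL
    · exact absurd hfL.symm (ne_of_lt (hfgt L ⟨h, hLIco.2⟩))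
  -- the backward orbit of the fixed point x₀
  set x : ℕ → ℝ := fun n => pre^[n] x₀ with hx_def
  have hx₀Ico : x₀ ∈ Ico a b := Ioo_subset_Ico_self hx₀
  have hmemx : ∀ n, x n ∈ Ioo a b := fun n => hIoo x₀ hx₀ n
  have hltx : ∀ n, x (n + 1) < x n := fun n => hdec x₀ hx₀ n
  have ax : Antitone x := antitone_nat_of_succ_le (fun n => (hltx n).le)
  have htax : Filter.Tendsto x Filter.atTop (𝓝 a) := htend x₀ hx₀
  have hfx : ∀ n, f (x (n + 1)) = x n := fun n => hfpre x₀ hx₀Ico n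
  have hxIco : ∀ n, x n ∈ Ico a b := fun n => Ioo_subset_Ico_self (hmemx n)
  have hfixx : ∀ n, g (x n) = x n := by
    intro n
    induction n with
    | zero => simpa [hx_def] using hgx₀
    | succ n ih =>
      have h1 : f (g (x (n + 1))) = f (x (n + 1)) := by
        rw [hcomm _ (hxIco (n + 1)), hfx n, ih]
      exact hf.1 (mapsTo hg (hxIco (n + 1))) (hxIco (n + 1)) h1
  have hxiter : ∀ j i : ℕ, f^[j] (x (i + j)) = x i := by
    intro j i
    simp only [hx_def]
    exact hiterpre x₀ hx₀Ico j i
  -- constants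
  have hx0Ico : x 0 ∈ Ico a b := hxIco 0
  obtain ⟨C, hC0, hC⟩ := exists_ratio hab hf hx0Ico
  set V := C * (x 0 - a) with hV_def
  have ga1 : derivWithin g (Ico a b) a = 1 := deriv_a_eq_one hab hg x hmemx hltx htax hfixx
  have hε : (0:ℝ) < Real.exp (-V) := Real.exp_pos _
  have hIccsub : ∀ i : ℕ, Icc (x (i + 1)) (x i) ⊆ Ico a b := fun i t ht =>
    ⟨(hmemx (i + 1)).1.le.trans ht.1, lt_of_le_of_lt ht.2 (hmemx i).2⟩
  have hsubIcc0 : ∀ i : ℕ, Icc (x (i + 1)) (x i) ⊆ Icc a (x 0) := fun i t ht =>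
    ⟨(hmemx (i + 1)).1.le.trans ht.1, ht.2.trans (ax (Nat.zero_le i))⟩
  -- g preserves each fundamental domain
  have hgIcc : ∀ i : ℕ, ∀ t ∈ Icc (x (i + 1)) (x i), g t ∈ Icc (x (i + 1)) (x i) := by
    intro i t ht
    constructor
    · have := (strictMonoOn hg).monotoneOn (hIccsub i ⟨le_rfl, (hltx i).le⟩) (hIccsub i ht) ht.1
      rwa [hfixx] at this
    · have := (strictMonoOn hg).monotoneOn (hIccsub i ht) (hIccsub i ⟨(hltx i).le, le_rfl⟩) ht.2
      rwa [hfixx] at this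
  have hgmIcc : ∀ i : ℕ, ∀ t ∈ Icc (x (i + 1)) (x i), ∀ m' : ℕ,
      g^[m'] t ∈ Icc (x (i + 1)) (x i) := by
    intro i t ht m'
    induction m' with
    | zero => simpa using ht
    | succ m' ih => rw [Function.iterate_succ_apply']; exact hgIcc i _ ih
  -- the uniform lower bound
  have hbound : ∀ m k : ℕ, ∀ z ∈ Icc (x (k + 1)) (x k), Real.exp (-V) ≤ P g (Ico a b) m z := by
    intro m k z hz
    have hzIco : z ∈ Ico a b := hIccsub k hz
    -- preimage points via the intermediate value theorem
    have hkey : ∀ n : ℕ, ∃ zn ∈ Icc (x (n + k + 1)) (x (n + k)),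
        Real.exp (-V) * P g (Ico a b) m zn ≤ P g (Ico a b) m z := by
      intro n
      have hle : x (n + k + 1) ≤ x (n + k) := (hltx (n + k)).le
      have hsub : Icc (x (n + k + 1)) (x (n + k)) ⊆ Ico a b := hIccsub (n + k)
      have e1 : f^[n] (x (n + k + 1)) = x (k + 1) := by
        have h := hxiter n (k + 1)
        rw [show (k + 1) + n = n + k + 1 by omega] at h
        exact h
      have e2 : f^[n] (x (n + k)) = x k := by
        have h := hxiter n k
        rw [show k + n = n + k by omega] at h
        exact h
      have hz' : z ∈ Icc (f^[n] (x (n + k + 1))) (f^[n] (x (n + k))) := by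
        rw [e1, e2]; exact hz
      obtain ⟨zn, hznI, hzneq⟩ := intermediate_value_Icc hle ((iter_contOn hf n).mono hsub) hz'
      refine ⟨zn, hznI, ?_⟩
      have hznIco : zn ∈ Ico a b := hsub hznI
      have hgmzn : g^[m] zn ∈ Icc (x (n + k + 1)) (x (n + k)) := hgmIcc (n + k) zn hznI m
      have hgmznIco : g^[m] zn ∈ Ico a b := hsub hgmzn
      -- iterates of f stay in shrinking fundamental domains
      have hfIcc : ∀ t ∈ Icc (x (n + k + 1)) (x (n + k)), ∀ j : ℕ, j ≤ n →
          f^[j] t ∈ Icc (x (n + k - j + 1)) (x (n + k - j)) := by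
        intro t ht j hj
        have e3 : f^[j] (x (n + k + 1)) = x (n + k - j + 1) := by
          have h := hxiter j (n + k - j + 1)
          rw [show (n + k - j + 1) + j = n + k + 1 by omega] at h
          exact h
        have e4 : f^[j] (x (n + k)) = x (n + k - j) := by
          have h := hxiter j (n + k - j)
          rw [show (n + k - j) + j = n + k by omega] at h
          exact h
        constructor
        · have := (iter_smono hf j).monotoneOn (hsub ⟨le_rfl, hle⟩) (hsub ht) ht.1
          rwa [e3] at this
        · have := (iter_smono hf j).monotoneOn (hsub ht) (hsub ⟨hle, le_rfl⟩) ht.2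
          rwa [e4] at this
      -- distortion estimate
      have hdist : P f (Ico a b) n zn ≤ Real.exp V * P f (Ico a b) n (g^[m] zn) := by
        have hL : ∑ j ∈ Finset.range n, |f^[j] zn - f^[j] (g^[m] zn)| ≤ x 0 - a := by
          have heach : ∀ j ∈ Finset.range n, |f^[j] zn - f^[j] (g^[m] zn)|
              ≤ x (n + k - j) - x (n + k - j + 1) := by
            intro j hj
            have hjn : j ≤ n := (Finset.mem_range.1 hj).le
            have h1 := hfIcc zn hznI j hjn
            have h2 := hfIcc _ hgmzn j hjn
            rw [abs_sub_le_iff]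
            constructor
            · linarith [h1.1, h1.2, h2.1, h2.2]
            · linarith [h1.1, h1.2, h2.1, h2.2]
          calc ∑ j ∈ Finset.range n, |f^[j] zn - f^[j] (g^[m] zn)|
              ≤ ∑ j ∈ Finset.range n, (x (n + k - j) - x (n + k - j + 1)) :=
                Finset.sum_le_sum heach
            _ ≤ x 0 - a := sum_tele (fun i => (hltx i).le) (fun i => (hmemx i).1.le)
                (σ := fun j => n + k - j) (fun i hi j hj h => by omega)
                (N := n + k + 1) (fun j hj => by omega)
        have hV_eq : Real.exp V = Real.exp (C * (x 0 - a)) := by rw [hV_def]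
        rw [hV_eq]
        apply distortion hf hx0Ico hC0 hC
          (fun j hj => hsubIcc0 (n + k - j) (hfIcc zn hznI j hj.le))
          (fun j hj => hsubIcc0 (n + k - j) (hfIcc _ hgmzn j hj.le)) hL hznIco hgmznIco
      -- the derivative identity at zn
      have hid := key_identity hf hg hcomm n m hznIco
      rw [hzneq] at hid
      -- hid : P g m z * P f n zn = P f n (g^[m] zn) * P g m zn
      have hPfzn : 0 < P f (Ico a b) n zn := P_pos hf n hznIco
      have hPfg : 0 < P f (Ico a b) n (g^[m] zn) := P_pos hf n hgmznIco
      have hPgzn : 0 ≤ P g (Ico a b) m zn := (P_pos hg m hznIco).le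
      have h1 : Real.exp (-V) * P f (Ico a b) n zn ≤ P f (Ico a b) n (g^[m] zn) := by
        have h := mul_le_mul_of_nonneg_left hdist (Real.exp_pos (-V)).le
        rwa [← mul_assoc, ← Real.exp_add, neg_add_cancel, Real.exp_zero, one_mul] at h
      have h2 : (Real.exp (-V) * P g (Ico a b) m zn) * P f (Ico a b) n zn
          ≤ P g (Ico a b) m z * P f (Ico a b) n zn := by
        calc (Real.exp (-V) * P g (Ico a b) m zn) * P f (Ico a b) n zn
            = P g (Ico a b) m zn * (Real.exp (-V) * P f (Ico a b) n zn) := by ring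
          _ ≤ P g (Ico a b) m zn * P f (Ico a b) n (g^[m] zn) :=
              mul_le_mul_of_nonneg_left h1 hPgzn
          _ = P f (Ico a b) n (g^[m] zn) * P g (Ico a b) m zn := by ring
          _ = P g (Ico a b) m z * P f (Ico a b) n zn := hid.symm
      exact le_of_mul_le_mul_right h2 hPfzn
    choose zn hznI hzn_est using hkey
    -- zn → a
    have hznt : Filter.Tendsto zn Filter.atTop (𝓝 a) := by
      apply tendsto_of_tendsto_of_tendsto_of_le_of_le (g := fun _ => a)
        (h := fun n => x (n + k)) tendsto_const_nhds (htax.comp (Filter.tendsto_add_atTop_nat k))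
      · exact fun n => (hmemx (n + k + 1)).1.le.trans (hznI n).1
      · exact fun n => (hznI n).2
    have hPt : Filter.Tendsto (fun n => P g (Ico a b) m (zn n)) Filter.atTop (𝓝 1) := by
      have hmem' : Filter.Tendsto zn Filter.atTop (𝓝[Ico a b] a) := by
        rw [tendsto_nhdsWithin_iff]
        exact ⟨hznt, Filter.Eventually.of_forall (fun n => hIccsub (n + k) (hznI n))⟩
      have h := ((P_contOn hg m) a ⟨le_rfl, hab⟩).tendsto.comp hmem'
      rwa [P_at_a hab hg ga1 m] at h
    have hT : Filter.Tendsto (fun n => Real.exp (-V) * P g (Ico a b) m (zn n))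
        Filter.atTop (𝓝 (Real.exp (-V))) := by
      simpa using hPt.const_mul (Real.exp (-V))
    exact le_of_tendsto hT (Filter.Eventually.of_forall hzn_est)
  -- produce a non-fixed point of g below x 0
  have hya : y ≠ a := fun h => hgy (by rw [h]; exact map_a hab hg)
  have hyIoo : y ∈ Ioo a b := ⟨lt_of_le_of_ne hy.1 (Ne.symm hya), hy.2⟩
  have hyt := htend y hyIoo
  obtain ⟨n, hn⟩ := (hyt.eventually_lt_const (hmemx 0).1).exists
  have hwIoo : pre^[n] y ∈ Ioo a b := hIoo y hyIoo n
  have hfw : f^[n] (pre^[n] y) = y := by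
    have h := hiterpre y hy n 0
    simpa using h
  have hgww : g (pre^[n] y) ≠ pre^[n] y := by
    intro h
    have hcy : f^[n] (g^[1] (pre^[n] y)) = g^[1] (f^[n] (pre^[n] y)) :=
      comm_iter hf hg hcomm n 1 _ (Ioo_subset_Ico_self hwIoo)
    simp only [Function.iterate_one] at hcy
    rw [h, hfw] at hcy
    exact hgy hcy.symm
  exact core hab hg x hmemx hltx hfixx htax hε hbound ⟨hwIoo.1, hn⟩ hgww

end KopellAux

/-- **Kopell's Lemma.** Suppose `f` and `g` are commuting orientation-preserving
`C²` diffeomorphisms of the half-open interval `[a,b)`.  If `f` has no fixed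
point in `(a,b)` and `g` has a fixed point in `(a,b)`, then `g` is the
identity. -/
theorem kopell_lemma {a b : ℝ} (hab : a < b) (f g : ℝ → ℝ)
    (hf : IsDiffeoOn 2 (Ico a b) f) (hg : IsDiffeoOn 2 (Ico a b) g)
    (hcomm : ∀ x ∈ Ico a b, f (g x) = g (f x))
    (hf_nofix : ∀ x ∈ Ioo a b, f x ≠ x)
    (hg_fix : ∃ x ∈ Ioo a b, g x = x) :
    ∀ x ∈ Ico a b, g x = x := by
  by_contra hcon
  push_neg at hcon
  obtain ⟨y, hy, hgy⟩ := hcon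
  obtain ⟨x₀, hx₀, hgx₀⟩ := hg_fix
  rcases KopellAux.no_fix_sign ((KopellAux.contOn hf).mono Ioo_subset_Ico_self) hf_nofix
    with hneg | hpos
  · exact KopellAux.case_contraction hab hf hg hcomm hneg hx₀ hgx₀ hy hgy
  · exact KopellAux.case_expansion hab hf hg hcomm hpos hx₀ hgx₀ hy hgy
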